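/- arXiv:2604.14797 — 2 statements merged into one kernel-verified Lean document; each statement's English description precedes it below -/
import Mathlib

section
/- Let u : ℝ → ℝ be an analytic even function and define ũ so that u(t) = ũ(t²). Then for every ℓ ≥ 1 and t ≥ 0, ũ^{(ℓ)}(t²) = (1/((2t)^{2ℓ−1}(ℓ−1)!)) ∫₀^t (t² − s²)^{ℓ−1} u^{(2ℓ)}(s) ds (for t > 0; the singularity at t = 0 is removable). -/
open MeasureTheory Real intervalIntegral

open Finset

private lemma binom_expand (p : ℕ) (τ s : ℝ) :
    (τ^2 - s^2)^p
      = ∑ m ∈ range (p+1), ((-1:ℝ)^(p-m) * (p.choose m)) * τ^(2*m) * s^(2*(p-m)) := by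
  rw [sub_eq_add_neg, add_pow]
  refine Finset.sum_congr rfl fun m hm => ?_
  rw [neg_pow, pow_mul, pow_mul]
  ring

private lemma alt_sum (p : ℕ) :
    ∑ m ∈ range (p+1), ((-1:ℝ)^(p-m) * (p.choose m)) = (0:ℝ)^p := by
  have h := Int.alternating_sum_range_choose (n := p)
  have h2 : ∑ m ∈ range (p+1), ((-1:ℝ)^m * (p.choose m)) = ((if p = 0 then (1:ℤ) else 0 : ℤ) : ℝ) := by
    exact_mod_cast congrArg (Int.cast : ℤ → ℝ) h
  rw [← sum_range_reflect]
  have h4 : ∀ j ∈ range (p+1),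
      ((-1:ℝ)^(p-(p+1-1-j)) * ((p.choose (p+1-1-j) : ℕ) : ℝ)) = (-1:ℝ)^j * (p.choose j) := by
    intro j hj; rw [mem_range] at hj
    have e1 : p + 1 - 1 - j = p - j := by omega
    have e2 : p - (p - j) = j := by omega
    rw [e1, e2, Nat.choose_symm (by omega)]
  rw [sum_congr rfl h4, h2]
  rcases Nat.eq_zero_or_pos p with hp | hp
  · simp [hp]
  · simp [Nat.pos_iff_ne_zero.mp hp, zero_pow]

private lemma hasDerivAt_F (f : ℝ → ℝ) (hf : Continuous f) (j : ℕ) (t : ℝ) :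
    HasDerivAt (fun τ : ℝ => ∫ s in (0:ℝ)..τ, s^j * f s) (t^j * f t) t := by
  have hc : Continuous fun s : ℝ => s^j * f s := (continuous_pow j).mul hf
  exact intervalIntegral.integral_hasDerivAt_right (hc.intervalIntegrable _ _)
    (hc.stronglyMeasurableAtFilter _ _) hc.continuousAt

private lemma int_expand (f : ℝ → ℝ) (hf : Continuous f) (p : ℕ) (τ : ℝ) :
    (∫ s in (0:ℝ)..τ, (τ^2 - s^2)^p * f s)
      = ∑ m ∈ range (p+1), ((-1:ℝ)^(p-m) * (p.choose m)) * τ^(2*m)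
          * ∫ s in (0:ℝ)..τ, s^(2*(p-m)) * f s := by
  have h1 : ∀ m ∈ range (p+1),
      ((-1:ℝ)^(p-m) * (p.choose m)) * τ^(2*m) * ∫ s in (0:ℝ)..τ, s^(2*(p-m)) * f s
      = ∫ s in (0:ℝ)..τ, ((-1:ℝ)^(p-m) * (p.choose m)) * τ^(2*m) * (s^(2*(p-m)) * f s) := by
    intro m _; rw [← intervalIntegral.integral_const_mul]
  rw [sum_congr rfl h1, ← intervalIntegral.integral_finset_sum]
  · refine intervalIntegral.integral_congr fun s _ => ?_
    rw [binom_expand p τ s, sum_mul]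
    exact sum_congr rfl fun m _ => by ring
  · intro m _
    exact (continuous_const.mul ((continuous_pow _).mul hf)).intervalIntegrable _ _

private lemma hasDerivAt_J (f : ℝ → ℝ) (hf : Continuous f) (p : ℕ) (t : ℝ) :
    HasDerivAt (fun τ : ℝ => ∫ s in (0:ℝ)..τ, (τ^2 - s^2)^p * f s)
      ((0:ℝ)^p * f t + 2*t*p * ∫ s in (0:ℝ)..t, (t^2 - s^2)^(p-1) * f s) t := by
  have hterm : ∀ m : ℕ, HasDerivAt
      (fun τ : ℝ => ((-1:ℝ)^(p-m) * (p.choose m)) * τ^(2*m) * ∫ s in (0:ℝ)..τ, s^(2*(p-m)) * f s)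
      (((-1:ℝ)^(p-m) * (p.choose m)) * (((2*m : ℕ) : ℝ) * t^(2*m-1) * (∫ s in (0:ℝ)..t, s^(2*(p-m)) * f s)
          + t^(2*m) * (t^(2*(p-m)) * f t))) t := by
    intro m
    have h1 : HasDerivAt (fun τ:ℝ => τ^(2*m)) (((2*m : ℕ) : ℝ) * t^(2*m-1)) t :=
      hasDerivAt_pow (2*m) t
    have h2 := (h1.fun_mul (hasDerivAt_F f hf (2*(p-m)) t)).const_mul ((-1:ℝ)^(p-m) * (p.choose m))
    simpa only [← mul_assoc] using h2
  have hsum := HasDerivAt.fun_sum (fun m (_ : m ∈ range (p+1)) => hterm m)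
  have hJ : HasDerivAt (fun τ : ℝ => ∫ s in (0:ℝ)..τ, (τ^2 - s^2)^p * f s)
      (∑ m ∈ range (p+1), ((-1:ℝ)^(p-m) * (p.choose m)) *
        (((2*m : ℕ) : ℝ) * t^(2*m-1) * (∫ s in (0:ℝ)..t, s^(2*(p-m)) * f s)
          + t^(2*m) * (t^(2*(p-m)) * f t))) t := by
    refine HasDerivAt.congr_of_eventuallyEq hsum ?_
    exact Filter.Eventually.of_forall fun τ => int_expand f hf p τ
  convert hJ using 1
  -- split the sum
  have hsplit : ∑ m ∈ range (p+1), ((-1:ℝ)^(p-m) * (p.choose m)) *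
        (((2*m : ℕ) : ℝ) * t^(2*m-1) * (∫ s in (0:ℝ)..t, s^(2*(p-m)) * f s)
          + t^(2*m) * (t^(2*(p-m)) * f t))
      = (∑ m ∈ range (p+1), ((-1:ℝ)^(p-m) * (p.choose m)) *
          (((2*m : ℕ) : ℝ) * t^(2*m-1) * (∫ s in (0:ℝ)..t, s^(2*(p-m)) * f s)))
        + ∑ m ∈ range (p+1), ((-1:ℝ)^(p-m) * (p.choose m)) * (t^(2*m) * (t^(2*(p-m)) * f t)) := by
    rw [← sum_add_distrib]
    exact sum_congr rfl fun m _ => by ring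
  rw [hsplit]
  have hsecond : ∑ m ∈ range (p+1), ((-1:ℝ)^(p-m) * (p.choose m)) * (t^(2*m) * (t^(2*(p-m)) * f t))
      = (0:ℝ)^p * f t := by
    have he : ∀ m ∈ range (p+1), ((-1:ℝ)^(p-m) * (p.choose m)) * (t^(2*m) * (t^(2*(p-m)) * f t))
        = ((-1:ℝ)^(p-m) * (p.choose m)) * (t^(2*p) * f t) := by
      intro m hm; rw [mem_range] at hm
      rw [← mul_assoc (t^(2*m)), ← pow_add]
      congr 3
      omega
    rw [sum_congr rfl he, ← sum_mul, alt_sum]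
    rcases Nat.eq_zero_or_pos p with hp | hp
    · simp [hp]
    · simp [zero_pow (by omega : p ≠ 0)]
  have hfirst : ∑ m ∈ range (p+1), ((-1:ℝ)^(p-m) * (p.choose m)) *
          (((2*m : ℕ) : ℝ) * t^(2*m-1) * (∫ s in (0:ℝ)..t, s^(2*(p-m)) * f s))
      = 2*t*p * ∫ s in (0:ℝ)..t, (t^2 - s^2)^(p-1) * f s := by
    rcases p with _ | q
    · simp
    · rw [Nat.succ_sub_one, int_expand f hf q t, mul_sum, sum_range_succ']
      have hz : ((-1:ℝ)^(q+1-0) * ((q+1).choose 0)) *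
          (((2*0 : ℕ) : ℝ) * t^(2*0-1) * (∫ s in (0:ℝ)..t, s^(2*(q+1-0)) * f s)) = 0 := by
        norm_num
      rw [hz, add_zero]
      refine sum_congr rfl fun i hi => ?_
      rw [mem_range] at hi
      have e1 : q + 1 - (i+1) = q - i := by omega
      have e2 : 2*(i+1) - 1 = 2*i + 1 := by omega
      rw [e1, e2]
      have e3 : ((q+1) * (q.choose i) : ℝ) = (((q+1).choose (i+1) : ℕ) : ℝ) * (i+1) := by
        exact_mod_cast congrArg (Nat.cast : ℕ → ℝ) (Nat.add_one_mul_choose_eq q i)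
      have e4 : (t:ℝ)^(2*i+1) = t^(2*i) * t := by rw [pow_succ]
      set I := ∫ s in (0:ℝ)..t, s^(2*(q-i)) * f s with hI
      push_cast
      push_cast at e3
      linear_combination (-(2 * t^(2*i+1) * (-1:ℝ)^(q-i) * I)) * e3
  rw [hfirst, hsecond, add_comm]

private lemma npow_aux (n : ℕ) (x t : ℝ) :
    (n:ℝ) * (x^2 * (t^2-x^2)^(n-1)) = n*t^2*(t^2-x^2)^(n-1) - n*(t^2-x^2)^n := by
  cases n with
  | zero => simp
  | succ m =>
    rw [Nat.add_sub_cancel]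
    push_cast
    rw [pow_succ]
    ring

set_option maxHeartbeats 2000000 in
/-- If `u` is an even analytic function and `v` satisfies `u(t) = v(t²)` with `v` analytic
on `[0,∞)`, then for `ℓ ≥ 1` and `t > 0`,
`v^{(ℓ)}(t²) = (1/((2t)^{2ℓ−1}(ℓ−1)!)) ∫₀^t (t² − s²)^{ℓ−1} u^{(2ℓ)}(s) ds`. -/
theorem iteratedDeriv_sq_rep (u v : ℝ → ℝ)
    (hu : ∀ x : ℝ, AnalyticAt ℝ u x)
    (heven : ∀ t : ℝ, u (-t) = u t)
    (hv : ∀ x : ℝ, 0 ≤ x → AnalyticAt ℝ v x)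
    (huv : ∀ t : ℝ, u t = v (t ^ 2)) :
    ∀ ℓ : ℕ, 1 ≤ ℓ → ∀ t : ℝ, 0 < t →
      iteratedDeriv ℓ v (t ^ 2)
        = (1 / ((2 * t) ^ (2 * ℓ - 1) * ((ℓ - 1).factorial : ℝ))) *
            ∫ s in (0:ℝ)..t, (t ^ 2 - s ^ 2) ^ (ℓ - 1) * iteratedDeriv (2 * ℓ) u s := by
  have hufun : u = fun τ : ℝ => v (τ^2) := funext huv
  have hUan : ∀ n : ℕ, AnalyticOnNhd ℝ (iteratedDeriv n u) Set.univ := by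
    intro n
    rw [iteratedDeriv_eq_iterate]
    exact AnalyticOnNhd.iterated_deriv (fun x _ => hu x) n
  have hUcont : ∀ n : ℕ, Continuous (iteratedDeriv n u) := fun n =>
    continuous_iff_continuousAt.mpr fun x => ((hUan n) x trivial).continuousAt
  have hUderiv : ∀ n : ℕ, ∀ x : ℝ, HasDerivAt (iteratedDeriv n u) (iteratedDeriv (n+1) u x) x := by
    intro n x
    rw [iteratedDeriv_succ]
    exact ((hUan n) x trivial).differentiableAt.hasDerivAt
  have hodd : ∀ k : ℕ, Odd k → iteratedDeriv k u 0 = 0 := by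
    intro k hk
    have h1 : (fun x : ℝ => u (-x)) = u := funext heven
    have h2 := iteratedDeriv_comp_neg k u 0
    rw [h1, neg_zero, hk.neg_one_pow, neg_smul, one_smul] at h2
    linarith
  have hVan : ∀ n : ℕ, AnalyticOnNhd ℝ (iteratedDeriv n v) (Set.Ioi (0:ℝ)) := by
    intro n; rw [iteratedDeriv_eq_iterate]
    exact AnalyticOnNhd.iterated_deriv (fun x hx => hv x (le_of_lt hx)) n
  have hVderiv : ∀ n : ℕ, ∀ x : ℝ, 0 < x →
      HasDerivAt (iteratedDeriv n v) (iteratedDeriv (n+1) v x) x := by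
    intro n x hx; rw [iteratedDeriv_succ]
    exact ((hVan n) x hx).differentiableAt.hasDerivAt
  have hcomp : ∀ n : ℕ, ∀ t : ℝ, 0 < t →
      HasDerivAt (fun τ : ℝ => iteratedDeriv n v (τ^2))
        (iteratedDeriv (n+1) v (t^2) * (2*t)) t := by
    intro n t ht
    have hsq : HasDerivAt (fun τ : ℝ => τ^2) (2*t) t := by
      simpa using hasDerivAt_pow 2 t
    exact (hVderiv n (t^2) (by positivity)).comp t hsq
  have E : ∀ n : ℕ, ∀ t : ℝ, 0 < t →
      (∫ s in (0:ℝ)..t, (t^2 - s^2)^n * iteratedDeriv (2*n+2) u s)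
        = (2*t)^(2*n+1) * (n.factorial : ℝ) * iteratedDeriv (n+1) v (t^2) := by
    intro n
    induction n with
    | zero =>
      intro t ht
      have h1 : (∫ s in (0:ℝ)..t, (t^2 - s^2)^0 * iteratedDeriv (2*0+2) u s)
          = ∫ s in (0:ℝ)..t, iteratedDeriv 2 u s := by
        refine intervalIntegral.integral_congr fun s _ => ?_
        norm_num
      have h2 : (∫ s in (0:ℝ)..t, iteratedDeriv 2 u s)
          = iteratedDeriv 1 u t - iteratedDeriv 1 u 0 := by
        refine intervalIntegral.integral_eq_sub_of_hasDerivAt (fun x _ => ?_)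
          ((hUcont 2).intervalIntegrable _ _)
        exact hUderiv 1 x
      have h3 : iteratedDeriv 1 u 0 = 0 := hodd 1 ⟨0, by ring⟩
      have h4 : HasDerivAt u (iteratedDeriv 1 v (t^2) * (2*t)) t := by
        rw [hufun]
        simpa using hcomp 0 t ht
      have h5 : iteratedDeriv 1 u t = iteratedDeriv 1 v (t^2) * (2*t) := by
        rw [iteratedDeriv_one]; exact h4.deriv
      rw [h1, h2, h3, h5]
      norm_num
      ring
    | succ n ih =>
      intro t ht
      -- normalize indices
      rw [show 2*(n+1)+2 = 2*n+3+1 from by omega, show 2*(n+1)+1 = 2*n+3 from by omega]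
      have hUd23 : ∀ x : ℝ, HasDerivAt (iteratedDeriv (2*n+2) u) (iteratedDeriv (2*n+3) u x) x := by
        intro x
        have h := hUderiv (2*n+2) x
        rwa [show 2*n+2+1 = 2*n+3 from by omega] at h
      -- derivative of Psi at t
      have h2τ : HasDerivAt (fun τ : ℝ => 2*τ) 2 t := by
        simpa using (hasDerivAt_id t).const_mul (2:ℝ)
      have hc1 : HasDerivAt (fun τ : ℝ => (2*τ)^(2*n+1) * (n.factorial : ℝ))
          ((((2*n+1 : ℕ)) : ℝ) * (2*t)^(2*n) * 2 * (n.factorial : ℝ)) t := by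
        have h := (h2τ.pow (2*n+1)).mul_const (n.factorial : ℝ)
        rwa [show 2*n+1-1 = 2*n from by omega] at h
      have hΨd : HasDerivAt
          (fun τ : ℝ => (2*τ)^(2*n+1) * (n.factorial : ℝ) * iteratedDeriv (n+1) v (τ^2))
          ((((2*n+1 : ℕ)) : ℝ) * (2*t)^(2*n) * 2 * (n.factorial : ℝ) * iteratedDeriv (n+1) v (t^2)
            + (2*t)^(2*n+1) * (n.factorial : ℝ) * (iteratedDeriv (n+1+1) v (t^2) * (2*t))) t :=
        hc1.mul (hcomp (n+1) t ht)
      have hAΨ : (fun τ : ℝ => ∫ s in (0:ℝ)..τ, (τ^2-s^2)^n * iteratedDeriv (2*n+2) u s)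
          =ᶠ[nhds t] (fun τ : ℝ => (2*τ)^(2*n+1) * (n.factorial:ℝ) * iteratedDeriv (n+1) v (τ^2)) :=
        Filter.eventuallyEq_of_mem (isOpen_Ioi.mem_nhds ht) (fun τ hτ => ih τ hτ)
      have hAd := hΨd.congr_of_eventuallyEq hAΨ
      have hJd := hasDerivAt_J (iteratedDeriv (2*n+2) u) (hUcont (2*n+2)) n t
      have hDA := hJd.unique hAd
      -- hDA : 0^n * g t + 2*t*n*K = DPsi
      -- IBP 1
      have hIBP1 : (∫ s in (0:ℝ)..t, (t^2-s^2)^(n+1) * iteratedDeriv (2*n+3+1) u s)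
          = (2*((n:ℝ)+1)) * ∫ s in (0:ℝ)..t, s * (t^2-s^2)^n * iteratedDeriv (2*n+3) u s := by
        have hder : ∀ x ∈ Set.uIcc (0:ℝ) t, HasDerivAt (fun s : ℝ => (t^2-s^2)^(n+1))
            ((((n+1:ℕ)):ℝ) * (t^2-x^2)^n * (-(2*x))) x := by
          intro x _
          have hneg : HasDerivAt (fun s : ℝ => t^2 - s^2) (-(2*x)) x := by
            simpa using (hasDerivAt_pow 2 x).const_sub (t^2)
          simpa using hneg.fun_pow (n+1)
        have hcont1 : Continuous fun x : ℝ => (((n+1:ℕ)):ℝ) * (t^2-x^2)^n * (-(2*x)) := by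
          fun_prop
        have h := intervalIntegral.integral_mul_deriv_eq_deriv_mul hder
            (fun x _ => hUderiv (2*n+3) x) (hcont1.intervalIntegrable _ _)
            ((hUcont (2*n+3+1)).intervalIntegrable _ _)
        rw [h, hodd (2*n+3) ⟨n+1, by ring⟩]
        have hcongr : (∫ x in (0:ℝ)..t, ((((n+1:ℕ)):ℝ) * (t^2-x^2)^n * (-(2*x)))
              * iteratedDeriv (2*n+3) u x)
            = ∫ x in (0:ℝ)..t, (-(2*((n:ℝ)+1)))
              * (x * (t^2-x^2)^n * iteratedDeriv (2*n+3) u x) := by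
          refine intervalIntegral.integral_congr fun x _ => ?_
          push_cast
          ring
        rw [hcongr, intervalIntegral.integral_const_mul]
        simp only [sub_self, zero_pow (Nat.succ_ne_zero n), zero_mul, mul_zero]
        ring
      -- IBP 2
      have hIBP2 : (∫ s in (0:ℝ)..t, s * (t^2-s^2)^n * iteratedDeriv (2*n+3) u s)
          = t * (0:ℝ)^n * iteratedDeriv (2*n+2) u t
            - ((2*(n:ℝ)+1) * (∫ s in (0:ℝ)..t, (t^2-s^2)^n * iteratedDeriv (2*n+2) u s)
               - (2*t^2*(n:ℝ)) * ∫ s in (0:ℝ)..t, (t^2-s^2)^(n-1) * iteratedDeriv (2*n+2) u s) := by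
        have hder : ∀ x ∈ Set.uIcc (0:ℝ) t, HasDerivAt (fun s : ℝ => s * (t^2-s^2)^n)
            (1 * (t^2-x^2)^n + x * ((n:ℝ) * (t^2-x^2)^(n-1) * (-(2*x)))) x := by
          intro x _
          have hneg : HasDerivAt (fun s : ℝ => t^2 - s^2) (-(2*x)) x := by
            simpa using (hasDerivAt_pow 2 x).const_sub (t^2)
          exact (hasDerivAt_id x).mul (hneg.pow n)
        have hcont2 : Continuous fun x : ℝ =>
            1 * (t^2-x^2)^n + x * ((n:ℝ) * (t^2-x^2)^(n-1) * (-(2*x))) := by fun_prop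
        have h := intervalIntegral.integral_mul_deriv_eq_deriv_mul hder
            (fun x _ => hUd23 x) (hcont2.intervalIntegrable _ _)
            ((hUcont (2*n+3)).intervalIntegrable _ _)
        rw [h]
        have hWint : (∫ x in (0:ℝ)..t,
              (1 * (t^2-x^2)^n + x * ((n:ℝ) * (t^2-x^2)^(n-1) * (-(2*x))))
                * iteratedDeriv (2*n+2) u x)
            = (2*(n:ℝ)+1) * (∫ s in (0:ℝ)..t, (t^2-s^2)^n * iteratedDeriv (2*n+2) u s)
              - (2*t^2*(n:ℝ)) * ∫ s in (0:ℝ)..t, (t^2-s^2)^(n-1) * iteratedDeriv (2*n+2) u s := by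
          have hpt : ∀ x : ℝ, (1 * (t^2-x^2)^n + x * ((n:ℝ) * (t^2-x^2)^(n-1) * (-(2*x))))
                * iteratedDeriv (2*n+2) u x
              = (2*(n:ℝ)+1) * ((t^2-x^2)^n * iteratedDeriv (2*n+2) u x)
                - (2*t^2*(n:ℝ)) * ((t^2-x^2)^(n-1) * iteratedDeriv (2*n+2) u x) := by
            intro x
            have hnp := npow_aux n x t
            linear_combination (-2 * iteratedDeriv (2*n+2) u x) * hnp
          rw [intervalIntegral.integral_congr (fun x _ => hpt x)]
          rw [intervalIntegral.integral_sub
              ((continuous_const.fun_mul (((continuous_const.fun_sub (continuous_pow 2)).fun_pow n).fun_mul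
                (hUcont (2*n+2)))).intervalIntegrable _ _)
              ((continuous_const.fun_mul (((continuous_const.fun_sub (continuous_pow 2)).fun_pow (n-1)).fun_mul
                (hUcont (2*n+2)))).intervalIntegrable _ _)]
          rw [intervalIntegral.integral_const_mul, intervalIntegral.integral_const_mul]
        rw [hWint]
        simp only [sub_self]
        ring
      rw [hIBP1, hIBP2]
      have hAt := ih t ht
      push_cast [Nat.factorial_succ] at hDA hAt ⊢
      linear_combination (2*((n:ℝ)+1)*t) * hDA + (-(2*((n:ℝ)+1))*(2*(n:ℝ)+1)) * hAt
  -- conclude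
  intro ℓ hℓ t ht
  obtain ⟨n, rfl⟩ : ∃ n, ℓ = n + 1 := ⟨ℓ - 1, by omega⟩
  have hE := E n t ht
  rw [show 2*(n+1) - 1 = 2*n+1 from by omega, show 2*(n+1) = 2*n+2 from by omega,
    show n+1-1 = n from by omega]
  have hpow : ((2*t)^(2*n+1) : ℝ) ≠ 0 := by positivity
  have hfac : ((n.factorial : ℝ)) ≠ 0 := by positivity
  rw [hE]
  field_simp
end

section
/- The function σ(t) := erf(t) + (2/√π) e^{-t²} ((11/5)t − (26/15)t³ + (4/15)t⁵) satisfies the moment conditions ∫₀^∞ (1 − σ(t)) t^{2j} dt = 0 for j = 0, 1, 2. -/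
open MeasureTheory Real

/-- The error function `erf(t) = (2/√π) ∫₀^t e^{-s²} ds`. -/
noncomputable def erf (t : ℝ) : ℝ := (2 / Real.sqrt Real.pi) * ∫ s in (0:ℝ)..t, Real.exp (-s ^ 2)

/-- Seventh-order regularizing function for the single-layer operator. -/
noncomputable def σS (t : ℝ) : ℝ :=
  erf t + (2 / Real.sqrt Real.pi) * Real.exp (-t ^ 2) *
    ((11 / 5) * t - (26 / 15) * t ^ 3 + (4 / 15) * t ^ 5)

open Filter Set in
lemma gauss_integrable : Integrable (fun s : ℝ => Real.exp (-s ^ 2)) := by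
  simpa using integrable_exp_neg_mul_sq (by norm_num : (0:ℝ) < 1)

open Filter Set in
lemma gauss_Ioi0 : ∫ s in Ioi (0:ℝ), Real.exp (-s ^ 2) = Real.sqrt Real.pi / 2 := by
  simpa using integral_gaussian_Ioi 1

open Filter Set in
lemma hasDerivAt_erf (t : ℝ) :
    HasDerivAt erf (2 / Real.sqrt Real.pi * Real.exp (-t ^ 2)) t := by
  have hcont : Continuous (fun s : ℝ => Real.exp (-s ^ 2)) := by fun_prop
  have h : HasDerivAt (fun u : ℝ => ∫ s in (0:ℝ)..u, Real.exp (-s ^ 2)) (Real.exp (-t ^ 2)) t :=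
    intervalIntegral.integral_hasDerivAt_right
      (gauss_integrable.intervalIntegrable (a := 0) (b := t))
      (hcont.stronglyMeasurableAtFilter _ _) hcont.continuousAt
  exact h.const_mul (2 / Real.sqrt Real.pi)

open Filter Set in
lemma erfc_eq {t : ℝ} (ht : 0 ≤ t) :
    1 - erf t = (2 / Real.sqrt Real.pi) * ∫ s in Ioi t, Real.exp (-s ^ 2) := by
  have hsplit : (∫ s in (0:ℝ)..t, Real.exp (-s ^ 2)) + (∫ s in Ioi t, Real.exp (-s ^ 2))
      = Real.sqrt Real.pi / 2 := by
    rw [intervalIntegral.integral_of_le ht, ← gauss_Ioi0, ← Set.Ioc_union_Ioi_eq_Ioi ht]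
    exact (setIntegral_union (Set.Ioc_disjoint_Ioi le_rfl) measurableSet_Ioi
      gauss_integrable.integrableOn gauss_integrable.integrableOn).symm
  have hπ : Real.sqrt Real.pi ≠ 0 := ne_of_gt (Real.sqrt_pos.2 Real.pi_pos)
  have h1 : (2 / Real.sqrt Real.pi) * (Real.sqrt Real.pi / 2) = 1 := by field_simp
  unfold erf
  linear_combination -h1 - (2 / Real.sqrt Real.pi) * hsplit

open Filter Set in
lemma erfc_nonneg {t : ℝ} (ht : 0 ≤ t) : 0 ≤ 1 - erf t := by
  rw [erfc_eq ht]
  have : 0 ≤ ∫ s in Ioi t, Real.exp (-s ^ 2) :=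
    setIntegral_nonneg measurableSet_Ioi (fun s _ => (Real.exp_nonneg _))
  positivity

open Filter Set in
lemma erfc_le {t : ℝ} (ht : 0 ≤ t) :
    1 - erf t ≤ (2 / Real.sqrt Real.pi) * (Real.exp 1 * Real.exp (-t)) := by
  rw [erfc_eq ht]
  have hc : (0:ℝ) ≤ 2 / Real.sqrt Real.pi := by positivity
  refine mul_le_mul_of_nonneg_left ?_ hc
  have h1 : IntegrableOn (fun s : ℝ => Real.exp (-s ^ 2)) (Ioi t) :=
    gauss_integrable.integrableOn
  have h2 : IntegrableOn (fun s : ℝ => Real.exp 1 * Real.exp (-s)) (Ioi t) := by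
    apply Integrable.const_mul
    exact exp_neg_integrableOn_Ioi t (by norm_num : (0:ℝ) < 1) |>.congr_fun
      (fun s _ => by norm_num) measurableSet_Ioi
  calc (∫ s in Ioi t, Real.exp (-s ^ 2))
      ≤ ∫ s in Ioi t, Real.exp 1 * Real.exp (-s) := by
        refine setIntegral_mono_on h1 h2 measurableSet_Ioi (fun s _ => ?_)
        rw [← Real.exp_add]
        exact Real.exp_le_exp.2 (by nlinarith [sq_nonneg (s - 1)])
    _ = Real.exp 1 * Real.exp (-t) := by
        rw [MeasureTheory.integral_const_mul, integral_exp_neg_Ioi]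

open Filter Set in
lemma L_int (k : ℕ) : IntegrableOn (fun t : ℝ => t ^ k * Real.exp (-t)) (Set.Ioi 0) := by
  have h := Real.GammaIntegral_convergent (s := (k:ℝ) + 1) (by positivity)
  refine h.congr_fun (fun x _ => ?_) measurableSet_Ioi
  rw [add_sub_cancel_right]; simp only [Real.rpow_natCast]; ring

open Filter Set in
lemma L1 (k : ℕ) (a : ℝ) :
    Tendsto (fun t : ℝ => Real.exp (-t ^ 2) * (a * t ^ k)) atTop (nhds 0) := by
  apply squeeze_zero_norm' (a := fun t : ℝ => |a| * (t ^ k * Real.exp (-t)))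
  · filter_upwards [eventually_ge_atTop (1:ℝ)] with t ht
    have ht0 : (0:ℝ) ≤ t := le_trans zero_le_one ht
    have hexp : Real.exp (-t ^ 2) ≤ Real.exp (-t) :=
      Real.exp_le_exp.2 (by nlinarith)
    rw [norm_mul, norm_mul, Real.norm_eq_abs, Real.norm_eq_abs, Real.norm_eq_abs,
      abs_of_nonneg (Real.exp_nonneg _), abs_pow, abs_of_nonneg ht0]
    calc Real.exp (-t ^ 2) * (|a| * t ^ k) ≤ Real.exp (-t) * (|a| * t ^ k) := by
          apply mul_le_mul_of_nonneg_right hexp (by positivity)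
      _ = |a| * (t ^ k * Real.exp (-t)) := by ring
  · simpa using (tendsto_pow_mul_exp_neg_atTop_nhds_zero k).const_mul |a|

open Filter Set in
lemma L2 (k : ℕ) (a : ℝ) :
    Tendsto (fun t : ℝ => (1 - erf t) * (a * t ^ k)) atTop (nhds 0) := by
  apply squeeze_zero_norm'
    (a := fun t : ℝ => (2 / Real.sqrt Real.pi * Real.exp 1 * |a|) * (t ^ k * Real.exp (-t)))
  · filter_upwards [eventually_ge_atTop (0:ℝ)] with t ht
    have h1 := erfc_le ht
    have h2 := erfc_nonneg ht
    rw [norm_mul, norm_mul, Real.norm_eq_abs, Real.norm_eq_abs, Real.norm_eq_abs,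
      abs_of_nonneg h2, abs_pow, abs_of_nonneg ht]
    calc (1 - erf t) * (|a| * t ^ k)
        ≤ (2 / Real.sqrt Real.pi * (Real.exp 1 * Real.exp (-t))) * (|a| * t ^ k) :=
          mul_le_mul_of_nonneg_right h1 (by positivity)
      _ = (2 / Real.sqrt Real.pi * Real.exp 1 * |a|) * (t ^ k * Real.exp (-t)) := by ring
  · simpa using (tendsto_pow_mul_exp_neg_atTop_nhds_zero k).const_mul
      (2 / Real.sqrt Real.pi * Real.exp 1 * |a|)

open Filter Set in
lemma integrable_f (k : ℕ) :
    IntegrableOn (fun t : ℝ => (1 - σS t) * t ^ k) (Set.Ioi 0) := by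
  have herf : Continuous erf :=
    continuous_iff_continuousAt.2 fun t => (hasDerivAt_erf t).continuousAt
  have hσ : Continuous σS := by
    unfold σS
    fun_prop
  have hf : Continuous (fun t : ℝ => (1 - σS t) * t ^ k) := by fun_prop
  set K : ℝ := 2 / Real.sqrt Real.pi * Real.exp 1 with hK
  have hK0 : 0 ≤ K := by positivity
  refine Integrable.mono'
    (g := fun t : ℝ => K * (t ^ k * Real.exp (-t)) +
      K * ((11/5) * (t ^ (k+1) * Real.exp (-t)) + (26/15) * (t ^ (k+3) * Real.exp (-t)) +
        (4/15) * (t ^ (k+5) * Real.exp (-t))))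
    ?_ hf.aestronglyMeasurable.restrict ?_
  · exact ((L_int k).const_mul K).add
      (((((L_int (k+1)).const_mul (11/5)).add ((L_int (k+3)).const_mul (26/15))).add
        ((L_int (k+5)).const_mul (4/15))).const_mul K)
  · rw [ae_restrict_iff' measurableSet_Ioi]
    refine Eventually.of_forall fun t ht => ?_
    have ht0 : (0:ℝ) ≤ t := le_of_lt ht
    have hA0 := erfc_nonneg ht0
    have hA1 := erfc_le ht0
    have hexp : Real.exp (-t ^ 2) ≤ Real.exp 1 * Real.exp (-t) := by
      rw [← Real.exp_add]
      exact Real.exp_le_exp.2 (by nlinarith [sq_nonneg (t - 1)])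
    have hq0 : (0:ℝ) ≤ (11/5) * t + (26/15) * t ^ 3 + (4/15) * t ^ 5 := by positivity
    have hc : (0:ℝ) ≤ 2 / Real.sqrt Real.pi := by positivity
    have habs : |1 - σS t| ≤ (1 - erf t) +
        2 / Real.sqrt Real.pi * Real.exp (-t ^ 2) *
          ((11/5) * t + (26/15) * t ^ 3 + (4/15) * t ^ 5) := by
      have hts : 1 - σS t = (1 - erf t) - 2 / Real.sqrt Real.pi * Real.exp (-t ^ 2) *
          ((11/5) * t - (26/15) * t ^ 3 + (4/15) * t ^ 5) := by
        simp only [σS]; ring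
      rw [hts]
      refine (abs_sub _ _).trans ?_
      rw [abs_of_nonneg hA0, abs_mul,
        abs_of_nonneg (by positivity : (0:ℝ) ≤ 2 / Real.sqrt Real.pi * Real.exp (-t ^ 2))]
      refine add_le_add le_rfl (mul_le_mul_of_nonneg_left ?_ (by positivity))
      rw [abs_le]
      constructor <;> nlinarith [pow_nonneg ht0 3, pow_nonneg ht0 5, ht0]
    rw [norm_mul, Real.norm_eq_abs, Real.norm_eq_abs, abs_pow, abs_of_nonneg ht0]
    calc |1 - σS t| * t ^ k
        ≤ ((2 / Real.sqrt Real.pi * (Real.exp 1 * Real.exp (-t))) +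
            2 / Real.sqrt Real.pi * (Real.exp 1 * Real.exp (-t)) *
              ((11/5) * t + (26/15) * t ^ 3 + (4/15) * t ^ 5)) * t ^ k := by
          refine mul_le_mul_of_nonneg_right ?_ (by positivity)
          refine habs.trans (add_le_add hA1 ?_)
          exact mul_le_mul_of_nonneg_right
            (mul_le_mul_of_nonneg_left hexp hc) hq0
      _ = K * (t ^ k * Real.exp (-t)) +
          K * ((11/5) * (t ^ (k+1) * Real.exp (-t)) + (26/15) * (t ^ (k+3) * Real.exp (-t)) +
            (4/15) * (t ^ (k+5) * Real.exp (-t))) := by rw [hK]; ring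

open Filter Set in
lemma engine {f : ℝ → ℝ} (F : ℝ → ℝ) (hd : ∀ t, HasDerivAt F (f t) t) (hF0 : F 0 = 0)
    (hlim : Tendsto F atTop (nhds 0)) (hint : IntegrableOn f (Set.Ioi 0)) :
    ∫ t in Set.Ioi (0:ℝ), f t = 0 := by
  rw [integral_Ioi_of_hasDerivAt_of_tendsto (hd 0).continuousAt.continuousWithinAt
    (fun x _ => hd x) hint hlim, hF0, sub_zero]

/-- The moment conditions `∫₀^∞ (1 − σ(t)) t^{2j} dt = 0` for `j = 0, 1, 2`. -/
theorem sigmaS_moments :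
    ∀ j : ℕ, j ≤ 2 → ∫ t in Set.Ioi (0:ℝ), (1 - σS t) * t ^ (2 * j) = 0 := by
  intro j hj
  interval_cases j
  · refine engine (F := fun t : ℝ => (1 - erf t) * (1 * t ^ 1) + Real.exp (-t ^ 2) *
        (2 / Real.sqrt Real.pi * (-(3/5) * t ^ 2 + (2/15) * t ^ 4))) ?_ ?_ ?_ ?_
    · intro t
      have h1 : HasDerivAt (fun u : ℝ => 1 - erf u)
          (-(2 / Real.sqrt Real.pi * Real.exp (-t ^ 2))) t := (hasDerivAt_erf t).const_sub 1
      have h2 := (hasDerivAt_pow 1 t).const_mul (1:ℝ)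
      have h3 : HasDerivAt (fun u : ℝ => Real.exp (-u ^ 2))
          (Real.exp (-t ^ 2) * -((2:ℕ) * t ^ 1)) t := ((hasDerivAt_pow 2 t).neg).exp
      have h4 := (((hasDerivAt_pow 2 t).const_mul (-(3/5):ℝ)).add
        ((hasDerivAt_pow 4 t).const_mul ((2/15):ℝ))).const_mul (2 / Real.sqrt Real.pi)
      have h5 := (h1.mul h2).add (h3.mul h4)
      refine h5.congr_deriv ?_
      simp only [σS, Pi.add_apply]
      push_cast
      ring
    · norm_num
    · have h0 := (L2 1 1).add ((L1 2 (2 / Real.sqrt Real.pi * (-(3/5)))).add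
        (L1 4 (2 / Real.sqrt Real.pi * (2/15))))
      rw [show (0:ℝ) + (0 + 0) = 0 from by norm_num] at h0
      exact h0.congr fun x => by ring
    · exact integrable_f (2 * 0)
  · refine engine (F := fun t : ℝ => (1 - erf t) * ((1/3) * t ^ 3) + Real.exp (-t ^ 2) *
        (2 / Real.sqrt Real.pi * (-(7/15) * t ^ 4 + (2/15) * t ^ 6))) ?_ ?_ ?_ ?_
    · intro t
      have h1 : HasDerivAt (fun u : ℝ => 1 - erf u)
          (-(2 / Real.sqrt Real.pi * Real.exp (-t ^ 2))) t := (hasDerivAt_erf t).const_sub 1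
      have h2 := (hasDerivAt_pow 3 t).const_mul ((1/3):ℝ)
      have h3 : HasDerivAt (fun u : ℝ => Real.exp (-u ^ 2))
          (Real.exp (-t ^ 2) * -((2:ℕ) * t ^ 1)) t := ((hasDerivAt_pow 2 t).neg).exp
      have h4 := (((hasDerivAt_pow 4 t).const_mul (-(7/15):ℝ)).add
        ((hasDerivAt_pow 6 t).const_mul ((2/15):ℝ))).const_mul (2 / Real.sqrt Real.pi)
      have h5 := (h1.mul h2).add (h3.mul h4)
      refine h5.congr_deriv ?_
      simp only [σS, Pi.add_apply]
      push_cast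
      ring
    · norm_num
    · have h0 := (L2 3 (1/3)).add ((L1 4 (2 / Real.sqrt Real.pi * (-(7/15)))).add
        (L1 6 (2 / Real.sqrt Real.pi * (2/15))))
      rw [show (0:ℝ) + (0 + 0) = 0 from by norm_num] at h0
      exact h0.congr fun x => by ring
    · exact integrable_f (2 * 1)
  · refine engine (F := fun t : ℝ => (1 - erf t) * ((1/5) * t ^ 5) + Real.exp (-t ^ 2) *
        (2 / Real.sqrt Real.pi * (-(1/3) * t ^ 6 + (2/15) * t ^ 8))) ?_ ?_ ?_ ?_
    · intro t
      have h1 : HasDerivAt (fun u : ℝ => 1 - erf u)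
          (-(2 / Real.sqrt Real.pi * Real.exp (-t ^ 2))) t := (hasDerivAt_erf t).const_sub 1
      have h2 := (hasDerivAt_pow 5 t).const_mul ((1/5):ℝ)
      have h3 : HasDerivAt (fun u : ℝ => Real.exp (-u ^ 2))
          (Real.exp (-t ^ 2) * -((2:ℕ) * t ^ 1)) t := ((hasDerivAt_pow 2 t).neg).exp
      have h4 := (((hasDerivAt_pow 6 t).const_mul (-(1/3):ℝ)).add
        ((hasDerivAt_pow 8 t).const_mul ((2/15):ℝ))).const_mul (2 / Real.sqrt Real.pi)
      have h5 := (h1.mul h2).add (h3.mul h4)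
      refine h5.congr_deriv ?_
      simp only [σS, Pi.add_apply]
      push_cast
      ring
    · norm_num
    · have h0 := (L2 5 (1/5)).add ((L1 6 (2 / Real.sqrt Real.pi * (-(1/3)))).add
        (L1 8 (2 / Real.sqrt Real.pi * (2/15))))
      rw [show (0:ℝ) + (0 + 0) = 0 from by norm_num] at h0
      exact h0.congr fun x => by ring
    · exact integrable_f (2 * 2)
end
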